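/- arXiv:2410.22238 — 3 statements merged into one kernel-verified Lean document; each statement's English description precedes it below -/
import Mathlib

section
/- Let $(a_n)_{n\ge1}$ and $(b_n)_{n\ge1}$ be nondecreasing real sequences with $a_n\to\infty$ and $b_n\to\infty$. Suppose there exist $\alpha>0$, $C>0$ with $a_n = Cn^{\alpha}+o(n^{\alpha})$ and $b_n = Cn^{\alpha}+o(n^{\alpha})$ as $n\to\infty$, and there is $E\in\mathbb{R}$ with $\frac{1}{N}\sum_{n=1}^N (b_n-a_n)\to E$ as $N\to\infty$. Then $\sum_{n\ge1}(a_n-\lambda)_- - \sum_{n\ge1}(b_n-\lambda)_- = C^{-1/\alpha}E\,\lambda^{1/\alpha} + o(\lambda^{1/\alpha})$ as $\lambda\to\infty$. -/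
open Filter Finset Asymptotics

private lemma exists_ge_aux (a : ℕ → ℝ) (haTop : Tendsto a atTop atTop) (lam : ℝ) :
    ∃ n, lam ≤ a (n + 1) := by
  obtain ⟨n, hn, hn1⟩ := ((haTop.eventually_ge_atTop lam).and (eventually_ge_atTop 1)).exists
  refine ⟨n - 1, ?_⟩
  rwa [Nat.sub_add_cancel hn1]

noncomputable def cnt (a : ℕ → ℝ) (haTop : Tendsto a atTop atTop) (lam : ℝ) : ℕ :=
  Nat.find (exists_ge_aux a haTop lam)

lemma cnt_spec (a : ℕ → ℝ) (haTop : Tendsto a atTop atTop) (lam : ℝ) :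
    lam ≤ a (cnt a haTop lam + 1) := Nat.find_spec (exists_ge_aux a haTop lam)

lemma cnt_lt (a : ℕ → ℝ) (haTop : Tendsto a atTop atTop) (lam : ℝ) {n : ℕ}
    (hn : n < cnt a haTop lam) : a (n + 1) < lam :=
  lt_of_not_ge (Nat.find_min (exists_ge_aux a haTop lam) hn)

lemma cnt_tendsto (a : ℕ → ℝ) (ha : Monotone a) (haTop : Tendsto a atTop atTop) :
    Tendsto (cnt a haTop) atTop atTop := by
  rw [tendsto_atTop]
  intro N
  filter_upwards [eventually_gt_atTop (a (N + 1))] with lam hlam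
  by_contra h
  push_neg at h
  have h1 : a (cnt a haTop lam + 1) ≤ a (N + 1) := ha (by omega)
  have h2 := cnt_spec a haTop lam
  linarith

/-- The tsum is actually a finite sum up to the counting function. -/
lemma tsum_eq_cnt (a : ℕ → ℝ) (ha : Monotone a) (haTop : Tendsto a atTop atTop) (lam : ℝ) :
    (∑' n : ℕ, max 0 (lam - a (n + 1)))
      = ∑ n ∈ Finset.range (cnt a haTop lam), (lam - a (n + 1)) := by
  rw [tsum_eq_sum (s := Finset.range (cnt a haTop lam)) ?h]
  · refine Finset.sum_congr rfl fun n hn => ?_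
    rw [Finset.mem_range] at hn
    have := cnt_lt a haTop lam hn
    exact max_eq_right (by linarith)
  case h =>
    intro n hn
    rw [Finset.mem_range, not_lt] at hn
    have h1 : a (cnt a haTop lam + 1) ≤ a (n + 1) := ha (by omega)
    have h2 := cnt_spec a haTop lam
    exact max_eq_left (by linarith)

lemma ratio_tendsto (a : ℕ → ℝ) (α C : ℝ) (hα : 0 < α) (hC : 0 < C)
    (haAsym : (fun n : ℕ => a n - C * (n : ℝ) ^ α) =o[atTop] fun n : ℕ => (n : ℝ) ^ α) :
    Tendsto (fun n : ℕ => a n / (C * (n : ℝ) ^ α)) atTop (nhds 1) := by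
  have h1 := haAsym.tendsto_div_nhds_zero
  have h2 : Tendsto (fun n : ℕ => (a n - C * (n : ℝ) ^ α) / ((n : ℝ) ^ α) * C⁻¹ + 1)
      atTop (nhds 1) := by
    have := (h1.mul_const C⁻¹).add_const 1
    simpa using this
  refine h2.congr' ?_
  filter_upwards [eventually_ge_atTop 1] with n hn
  have hn0 : (0 : ℝ) < (n : ℝ) := by exact_mod_cast Nat.lt_of_lt_of_le Nat.zero_lt_one hn
  have hp : (0 : ℝ) < (n : ℝ) ^ α := Real.rpow_pos_of_pos hn0 α
  field_simp
  ring

lemma cnt_ratio_tendsto (a : ℕ → ℝ) (ha : Monotone a) (haTop : Tendsto a atTop atTop)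
    (α C : ℝ) (hα : 0 < α) (hC : 0 < C)
    (haAsym : (fun n : ℕ => a n - C * (n : ℝ) ^ α) =o[atTop] fun n : ℕ => (n : ℝ) ^ α) :
    Tendsto (fun lam : ℝ => C * (cnt a haTop lam : ℝ) ^ α / lam) atTop (nhds 1) := by
  set q : ℕ → ℝ := fun n => a n / (C * (n : ℝ) ^ α) with hq_def
  have hq : Tendsto q atTop (nhds 1) := ratio_tendsto a α C hα hC haAsym
  set K : ℝ → ℕ := fun lam => cnt a haTop lam with hK_def
  have hK : Tendsto K atTop atTop := cnt_tendsto a ha haTop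
  -- the lower bound sequence
  have hLseq : Tendsto (fun n : ℕ => ((n : ℝ) / ((n : ℝ) + 1)) ^ α * (q (n + 1))⁻¹)
      atTop (nhds 1) := by
    have hbase : Tendsto (fun n : ℕ => (n : ℝ) / ((n : ℝ) + 1)) atTop (nhds 1) :=
      tendsto_natCast_div_add_atTop (1 : ℝ)
    have hrpow : Tendsto (fun n : ℕ => ((n : ℝ) / ((n : ℝ) + 1)) ^ α) atTop (nhds 1) := by
      have hc := (Real.continuousAt_rpow_const 1 α (Or.inl one_ne_zero)).tendsto
      have := hc.comp hbase
      simpa [Function.comp_def] using this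
    have hqinv : Tendsto (fun n : ℕ => (q (n + 1))⁻¹) atTop (nhds 1) := by
      have := ((hq.comp (tendsto_add_atTop_nat 1)).inv₀ one_ne_zero)
      simpa using this
    simpa using hrpow.mul hqinv
  have hLcomp : Tendsto (fun lam : ℝ =>
      ((K lam : ℝ) / ((K lam : ℝ) + 1)) ^ α * (q (K lam + 1))⁻¹) atTop (nhds 1) :=
    hLseq.comp hK
  have hUcomp : Tendsto (fun lam : ℝ => (q (K lam))⁻¹) atTop (nhds 1) := by
    have := ((hq.comp hK).inv₀ one_ne_zero)
    simpa using this
  refine tendsto_of_tendsto_of_tendsto_of_le_of_le' hLcomp hUcomp ?_ ?_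
  · -- lower bound
    filter_upwards [hK.eventually_ge_atTop 1, (haTop.comp hK).eventually_gt_atTop 0,
      eventually_gt_atTop (0 : ℝ)] with lam hK1 haK hlam
    have hKpos : (0 : ℝ) < (K lam : ℝ) := by exact_mod_cast hK1
    have hK1pos : (0 : ℝ) < (K lam : ℝ) + 1 := by linarith
    have hrp : (0 : ℝ) < ((K lam : ℝ) + 1) ^ α := Real.rpow_pos_of_pos hK1pos α
    have hrp' : (0 : ℝ) < ((K lam : ℝ)) ^ α := Real.rpow_pos_of_pos hKpos α
    have haK1 : (0 : ℝ) < a (K lam + 1) := lt_of_lt_of_le haK (ha (Nat.le_succ _))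
    have hspec : lam ≤ a (K lam + 1) := cnt_spec a haTop lam
    have hcast : ((K lam : ℝ) + 1) = ((K lam + 1 : ℕ) : ℝ) := by push_cast; ring
    have heq : ((K lam : ℝ) / ((K lam : ℝ) + 1)) ^ α * (q (K lam + 1))⁻¹
        = C * (K lam : ℝ) ^ α / a (K lam + 1) := by
      rw [Real.div_rpow hKpos.le hK1pos.le, hq_def]
      simp only [← hcast]
      field_simp
    rw [heq]
    exact div_le_div_of_nonneg_left (by positivity) hlam hspec
  · -- upper bound
    filter_upwards [hK.eventually_ge_atTop 1, (haTop.comp hK).eventually_gt_atTop 0,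
      eventually_gt_atTop (0 : ℝ)] with lam hK1 haK hlam
    have hKpos : (0 : ℝ) < (K lam : ℝ) := by exact_mod_cast hK1
    have hrp' : (0 : ℝ) < ((K lam : ℝ)) ^ α := Real.rpow_pos_of_pos hKpos α
    have hlt : a (K lam) < lam := by
      have h := cnt_lt a haTop lam (n := K lam - 1)
        (Nat.sub_lt (Nat.lt_of_lt_of_le Nat.zero_lt_one hK1) Nat.one_pos)
      rwa [Nat.sub_add_cancel hK1] at h
    have heq : (q (K lam))⁻¹ = C * (K lam : ℝ) ^ α / a (K lam) := by
      rw [hq_def]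
      field_simp
    rw [heq]
    exact div_le_div_of_nonneg_left (by positivity) (by positivity : (0:ℝ) < a (K lam)) hlt.le

lemma cnt_isLittleO (a : ℕ → ℝ) (ha : Monotone a) (haTop : Tendsto a atTop atTop)
    (α C : ℝ) (hα : 0 < α) (hC : 0 < C)
    (haAsym : (fun n : ℕ => a n - C * (n : ℝ) ^ α) =o[atTop] fun n : ℕ => (n : ℝ) ^ α) :
    (fun lam : ℝ => (cnt a haTop lam : ℝ) - C ^ (-(1 / α)) * lam ^ (1 / α)) =o[atTop]
      fun lam : ℝ => lam ^ (1 / α) := by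
  set K : ℝ → ℕ := fun lam => cnt a haTop lam with hK_def
  have hr := cnt_ratio_tendsto a ha haTop α C hα hC haAsym
  have h2 : Tendsto (fun lam : ℝ => (C * (K lam : ℝ) ^ α / lam) ^ (1 / α)) atTop (nhds 1) := by
    have hc := (Real.continuousAt_rpow_const 1 (1 / α) (Or.inl one_ne_zero)).tendsto
    have := hc.comp hr
    simpa [Function.comp_def] using this
  have h3 : Tendsto (fun lam : ℝ => (K lam : ℝ) / lam ^ (1 / α)) atTop
      (nhds (C ^ (-(1 / α)))) := by
    have h4 := h2.mul_const (C ^ (-(1 / α)))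
    rw [one_mul] at h4
    refine h4.congr' ?_
    filter_upwards [eventually_gt_atTop (0 : ℝ)] with lam hlam
    have hKnn : (0 : ℝ) ≤ (K lam : ℝ) := Nat.cast_nonneg _
    have hKa : (0 : ℝ) ≤ (K lam : ℝ) ^ α := Real.rpow_nonneg hKnn α
    have hplam : (0 : ℝ) < lam ^ (1 / α) := Real.rpow_pos_of_pos hlam _
    rw [Real.div_rpow (by positivity) hlam.le, Real.mul_rpow hC.le hKa,
      one_div, Real.rpow_rpow_inv hKnn hα.ne', ← one_div, Real.rpow_neg hC.le]
    have hCp : (0 : ℝ) < C ^ (1 / α) := Real.rpow_pos_of_pos hC _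
    field_simp
  have hne : ∀ᶠ lam : ℝ in atTop, lam ^ (1 / α) = 0 →
      (K lam : ℝ) - C ^ (-(1 / α)) * lam ^ (1 / α) = 0 := by
    filter_upwards [eventually_gt_atTop (0 : ℝ)] with lam hlam h
    exact absurd h (Real.rpow_pos_of_pos hlam _).ne'
  rw [isLittleO_iff_tendsto' hne]
  have h5 := h3.sub_const (C ^ (-(1 / α)))
  rw [sub_self] at h5
  refine h5.congr' ?_
  filter_upwards [eventually_gt_atTop (0 : ℝ)] with lam hlam
  have hplam : (0 : ℝ) < lam ^ (1 / α) := Real.rpow_pos_of_pos hlam _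
  field_simp

/-- The key combinatorial bound, one-sided version. -/
lemma key₁ (f g : ℕ → ℝ) (hf : Monotone f) (lam : ℝ) (A B : ℕ) (hAB : A ≤ B)
    (hfA : lam ≤ f A) (hgB : ∀ n < B, g n < lam) :
    |(∑ n ∈ Finset.range A, (lam - f n)) - (∑ n ∈ Finset.range B, (lam - g n))
        - ∑ n ∈ Finset.range A, (g n - f n)|
      ≤ |(∑ n ∈ Finset.range A, (g n - f n)) - ∑ n ∈ Finset.range B, (g n - f n)| := by
  have hsplit1 : (∑ n ∈ Finset.range B, (lam - g n))
      = (∑ n ∈ Finset.range A, (lam - g n)) + ∑ n ∈ Finset.Ico A B, (lam - g n) :=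
    (Finset.sum_range_add_sum_Ico _ hAB).symm
  have hsplit2 : (∑ n ∈ Finset.range B, (g n - f n))
      = (∑ n ∈ Finset.range A, (g n - f n)) + ∑ n ∈ Finset.Ico A B, (g n - f n) :=
    (Finset.sum_range_add_sum_Ico _ hAB).symm
  have hXY : (∑ n ∈ Finset.range A, (lam - f n)) - (∑ n ∈ Finset.range A, (lam - g n))
      = ∑ n ∈ Finset.range A, (g n - f n) := by
    rw [← Finset.sum_sub_distrib]
    exact Finset.sum_congr rfl fun n _ => by ring
  have h1 : (0 : ℝ) ≤ ∑ n ∈ Finset.Ico A B, (lam - g n) := by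
    refine Finset.sum_nonneg fun n hn => ?_
    rw [Finset.mem_Ico] at hn
    have := hgB n hn.2
    linarith
  have h2 : (∑ n ∈ Finset.Ico A B, (lam - g n)) ≤ ∑ n ∈ Finset.Ico A B, (f n - g n) := by
    refine Finset.sum_le_sum fun n hn => ?_
    rw [Finset.mem_Ico] at hn
    have : f A ≤ f n := hf hn.1
    linarith
  have h3 : (∑ n ∈ Finset.Ico A B, (f n - g n)) = -∑ n ∈ Finset.Ico A B, (g n - f n) := by
    rw [← Finset.sum_neg_distrib]
    exact Finset.sum_congr rfl fun n _ => by ring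
  rw [hsplit1, hsplit2]
  have hgoal : |(∑ n ∈ Finset.range A, (lam - f n))
      - ((∑ n ∈ Finset.range A, (lam - g n)) + ∑ n ∈ Finset.Ico A B, (lam - g n))
      - ∑ n ∈ Finset.range A, (g n - f n)| = ∑ n ∈ Finset.Ico A B, (lam - g n) := by
    have : (∑ n ∈ Finset.range A, (lam - f n))
        - ((∑ n ∈ Finset.range A, (lam - g n)) + ∑ n ∈ Finset.Ico A B, (lam - g n))
        - ∑ n ∈ Finset.range A, (g n - f n) = -(∑ n ∈ Finset.Ico A B, (lam - g n)) := by
      rw [← hXY]; ring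
    rw [this, abs_neg, abs_of_nonneg h1]
  rw [hgoal]
  have : (∑ n ∈ Finset.range A, (g n - f n))
      - ((∑ n ∈ Finset.range A, (g n - f n)) + ∑ n ∈ Finset.Ico A B, (g n - f n))
      = -∑ n ∈ Finset.Ico A B, (g n - f n) := by ring
  rw [this, abs_neg]
  exact le_trans (h2.trans_eq h3) (neg_le_abs _)

theorem stmt_1 (a b : ℕ → ℝ) (ha : Monotone a) (hb : Monotone b)
    (haTop : Tendsto a atTop atTop) (hbTop : Tendsto b atTop atTop)
    (α C E : ℝ) (hα : 0 < α) (hC : 0 < C)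
    (haAsym : (fun n : ℕ => a n - C * (n : ℝ) ^ α) =o[atTop] fun n : ℕ => (n : ℝ) ^ α)
    (hbAsym : (fun n : ℕ => b n - C * (n : ℝ) ^ α) =o[atTop] fun n : ℕ => (n : ℝ) ^ α)
    (hCesaro : Tendsto (fun N : ℕ => (∑ n ∈ Finset.Icc 1 N, (b n - a n)) / N) atTop (nhds E)) :
    (fun lam : ℝ =>
        (∑' n : ℕ, max 0 (lam - a (n + 1))) - (∑' n : ℕ, max 0 (lam - b (n + 1)))
          - C ^ (-(1 / α)) * E * lam ^ (1 / α)) =o[atTop] fun lam : ℝ => lam ^ (1 / α) := by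
  set c : ℝ := C ^ (-(1 / α)) with hc_def
  set p : ℝ → ℝ := fun lam => lam ^ (1 / α) with hp_def
  set Ka : ℝ → ℕ := cnt a haTop with hKa_def
  set Kb : ℝ → ℕ := cnt b hbTop with hKb_def
  set T : ℕ → ℝ := fun N => ∑ n ∈ Finset.range N, (b (n + 1) - a (n + 1)) with hT_def
  -- Cesàro in range form
  have hCes' : Tendsto (fun N : ℕ => T N / N) atTop (nhds E) := by
    refine hCesaro.congr fun N => ?_
    congr 1
    rw [hT_def]
    rw [← Finset.Ico_add_one_right_eq_Icc, Finset.sum_Ico_eq_sum_range]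
    simp only [Nat.succ_sub_one]
    exact Finset.sum_congr rfl fun n _ => by rw [add_comm 1 n]
  have hT : (fun N : ℕ => T N - E * N) =o[atTop] fun N : ℕ => (N : ℝ) := by
    have hne : ∀ᶠ N : ℕ in atTop, (N : ℝ) = 0 → T N - E * N = 0 := by
      filter_upwards [eventually_ge_atTop 1] with N hN h
      exact absurd h (by exact_mod_cast Nat.one_le_iff_ne_zero.mp hN)
    rw [isLittleO_iff_tendsto' hne]
    have h5 := hCes'.sub_const E
    rw [sub_self] at h5
    refine h5.congr' ?_
    filter_upwards [eventually_ge_atTop 1] with N hN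
    have : (N : ℝ) ≠ 0 := by exact_mod_cast Nat.one_le_iff_ne_zero.mp hN
    field_simp
  have hKaTop : Tendsto Ka atTop atTop := cnt_tendsto a ha haTop
  have hKbTop : Tendsto Kb atTop atTop := cnt_tendsto b hb hbTop
  have hKa : (fun lam : ℝ => (Ka lam : ℝ) - c * p lam) =o[atTop] p :=
    cnt_isLittleO a ha haTop α C hα hC haAsym
  have hKb : (fun lam : ℝ => (Kb lam : ℝ) - c * p lam) =o[atTop] p :=
    cnt_isLittleO b hb hbTop α C hα hC hbAsym
  have hKaO : (fun lam : ℝ => (Ka lam : ℝ)) =O[atTop] p := by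
    have := hKa.isBigO.add (isBigO_const_mul_self c p atTop)
    refine this.congr_left fun lam => by ring
  have hKbO : (fun lam : ℝ => (Kb lam : ℝ)) =O[atTop] p := by
    have := hKb.isBigO.add (isBigO_const_mul_self c p atTop)
    refine this.congr_left fun lam => by ring
  have hTKa : (fun lam : ℝ => T (Ka lam) - E * (Ka lam : ℝ)) =o[atTop] p :=
    (hT.comp_tendsto hKaTop).trans_isBigO hKaO
  have hTKb : (fun lam : ℝ => T (Kb lam) - E * (Kb lam : ℝ)) =o[atTop] p :=
    (hT.comp_tendsto hKbTop).trans_isBigO hKbO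
  rw [isLittleO_iff]
  intro ε hε
  have hden : (0 : ℝ) < 3 + 3 * |E| := by positivity
  set δ : ℝ := ε / (3 + 3 * |E|) with hδ_def
  have hδ : 0 < δ := by positivity
  filter_upwards [hKa.def hδ, hKb.def hδ, hTKa.def hδ, hTKb.def hδ,
    eventually_gt_atTop (0 : ℝ)] with lam h1 h2 h3 h4 hlam
  simp only [Real.norm_eq_abs] at h1 h2 h3 h4 ⊢
  have hp0 : 0 < p lam := Real.rpow_pos_of_pos hlam _
  rw [abs_of_pos hp0] at h1 h2 h3 h4 ⊢
  rw [tsum_eq_cnt a ha haTop lam, tsum_eq_cnt b hb hbTop lam]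
  -- key bound
  have hεδ : (3 + 3 * |E|) * δ = ε := by
    rw [hδ_def]; field_simp
  have htri : |(Ka lam : ℝ) - (Kb lam : ℝ)| ≤ 2 * (δ * p lam) := by
    calc |(Ka lam : ℝ) - (Kb lam : ℝ)|
        = |((Ka lam : ℝ) - c * p lam) - ((Kb lam : ℝ) - c * p lam)| := by ring_nf
      _ ≤ |((Ka lam : ℝ) - c * p lam)| + |((Kb lam : ℝ) - c * p lam)| := abs_sub _ _
      _ ≤ δ * p lam + δ * p lam := add_le_add h1 h2
      _ = 2 * (δ * p lam) := by ring
  have hTab : |T (Ka lam) - T (Kb lam)| ≤ 2 * (δ * p lam) + |E| * (2 * (δ * p lam)) := by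
    calc |T (Ka lam) - T (Kb lam)|
        = |(T (Ka lam) - E * Ka lam) - (T (Kb lam) - E * Kb lam)
            + E * ((Ka lam : ℝ) - Kb lam)| := by ring_nf
      _ ≤ |(T (Ka lam) - E * Ka lam) - (T (Kb lam) - E * Kb lam)|
            + |E * ((Ka lam : ℝ) - Kb lam)| := abs_add_le _ _
      _ ≤ (|T (Ka lam) - E * Ka lam| + |T (Kb lam) - E * Kb lam|)
            + |E| * |(Ka lam : ℝ) - Kb lam| := by
          rw [abs_mul]
          exact add_le_add (abs_sub _ _) le_rfl
      _ ≤ (δ * p lam + δ * p lam) + |E| * (2 * (δ * p lam)) := by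
          refine add_le_add (add_le_add h3 h4) ?_
          exact mul_le_mul_of_nonneg_left htri (abs_nonneg E)
      _ = 2 * (δ * p lam) + |E| * (2 * (δ * p lam)) := by ring
  -- the structural bound: |Sa - Sb - T(min)| ≤ |T Ka - T Kb|
  set m : ℕ := min (Ka lam) (Kb lam) with hm_def
  have hkey : |(∑ n ∈ Finset.range (Ka lam), (lam - a (n + 1)))
      - (∑ n ∈ Finset.range (Kb lam), (lam - b (n + 1))) - T m|
      ≤ |T (Ka lam) - T (Kb lam)| := by
    rcases le_total (Ka lam) (Kb lam) with hAB | hAB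
    · have hmin : m = Ka lam := min_eq_left hAB
      rw [hmin]
      have := key₁ (fun n => a (n + 1)) (fun n => b (n + 1))
        (fun i j hij => ha (by omega)) lam (Ka lam) (Kb lam) hAB
        (cnt_spec a haTop lam) (fun n hn => cnt_lt b hbTop lam hn)
      exact this
    · have hmin : m = Kb lam := min_eq_right hAB
      rw [hmin]
      have hswap := key₁ (fun n => b (n + 1)) (fun n => a (n + 1))
        (fun i j hij => hb (by omega)) lam (Kb lam) (Ka lam) hAB
        (cnt_spec b hbTop lam) (fun n hn => cnt_lt a haTop lam hn)
      -- hswap : |Sb - Sa - ∑_{range Kb}(a - b)| ≤ |∑_{range Kb}(a-b) - ∑_{range Ka}(a-b)|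
      have e1 : (∑ n ∈ Finset.range (Kb lam), (a (n + 1) - b (n + 1))) = -T (Kb lam) := by
        rw [hT_def, ← Finset.sum_neg_distrib]
        exact Finset.sum_congr rfl fun n _ => by ring
      have e2 : (∑ n ∈ Finset.range (Ka lam), (a (n + 1) - b (n + 1))) = -T (Ka lam) := by
        rw [hT_def, ← Finset.sum_neg_distrib]
        exact Finset.sum_congr rfl fun n _ => by ring
      rw [e1, e2] at hswap
      calc |(∑ n ∈ Finset.range (Ka lam), (lam - a (n + 1)))
          - (∑ n ∈ Finset.range (Kb lam), (lam - b (n + 1))) - T (Kb lam)|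
          = |(∑ n ∈ Finset.range (Kb lam), (lam - b (n + 1)))
            - (∑ n ∈ Finset.range (Ka lam), (lam - a (n + 1))) - (- T (Kb lam))| := by
            rw [← abs_neg]; congr 1; ring
        _ ≤ |(-T (Kb lam)) - (-T (Ka lam))| := hswap
        _ = |T (Ka lam) - T (Kb lam)| := by congr 1; ring
  -- bounds on the min-indexed quantities
  have hmboth : |T m - E * m| ≤ δ * p lam ∧ |(m : ℝ) - c * p lam| ≤ δ * p lam := by
    rcases le_total (Ka lam) (Kb lam) with hAB | hAB
    · rw [hm_def, min_eq_left hAB]; exact ⟨h3, h1⟩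
    · rw [hm_def, min_eq_right hAB]; exact ⟨h4, h2⟩
  obtain ⟨hm1, hm2⟩ := hmboth
  -- assemble
  have hdecomp : (∑ n ∈ Finset.range (Ka lam), (lam - a (n + 1)))
      - (∑ n ∈ Finset.range (Kb lam), (lam - b (n + 1))) - C ^ (-(1 / α)) * E * p lam
      = ((∑ n ∈ Finset.range (Ka lam), (lam - a (n + 1)))
        - (∑ n ∈ Finset.range (Kb lam), (lam - b (n + 1))) - T m)
        + (T m - E * m) + E * ((m : ℝ) - c * p lam) := by
    rw [hc_def]; ring
  rw [hdecomp]
  calc |((∑ n ∈ Finset.range (Ka lam), (lam - a (n + 1)))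
        - (∑ n ∈ Finset.range (Kb lam), (lam - b (n + 1))) - T m)
        + (T m - E * m) + E * ((m : ℝ) - c * p lam)|
      ≤ |(∑ n ∈ Finset.range (Ka lam), (lam - a (n + 1)))
        - (∑ n ∈ Finset.range (Kb lam), (lam - b (n + 1))) - T m|
        + |T m - E * m| + |E * ((m : ℝ) - c * p lam)| := abs_add_three _ _ _
    _ ≤ (2 * (δ * p lam) + |E| * (2 * (δ * p lam))) + δ * p lam + |E| * (δ * p lam) := by
        refine add_le_add (add_le_add (hkey.trans hTab) hm1) ?_
        rw [abs_mul]
        exact mul_le_mul_of_nonneg_left hm2 (abs_nonneg E)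
    _ = (3 + 3 * |E|) * δ * p lam := by ring
    _ = ε * p lam := by rw [mul_assoc ((3:ℝ) + 3 * |E|) δ (p lam), ← mul_assoc, hεδ]
end

section
/- Let $(a_n)_{n\ge1}$ be a nondecreasing real sequence with $a_n = Cn^{\alpha}+o(n^{\alpha})$ as $n\to\infty$ for some constants $C>0$ and $\alpha>0$. Then $\sum_{n\ge1}(a_n-\lambda)_- = \frac{\alpha}{1+\alpha}\,C^{-1/\alpha}\,\lambda^{1+1/\alpha} + o(\lambda^{1+1/\alpha})$ as $\lambda\to\infty$. -/
open Filter
open Real MeasureTheory Topology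


lemma myFcont {α : ℝ} (hα : 0 < α) (c lam : ℝ) :
    Continuous (fun x : ℝ => max 0 (lam - c * x ^ α)) :=
  continuous_const.max (continuous_const.sub (continuous_const.mul
    (Real.continuous_rpow_const hα.le)))

lemma myFzero {α c lam : ℝ} (hα : 0 < α) (hc : 0 < c) (hlam : 0 < lam) {x : ℝ}
    (hx : (lam / c) ^ (1/α) ≤ x) : max 0 (lam - c * x ^ α) = 0 := by
  have h0 : (0:ℝ) ≤ (lam/c) ^ (1/α) := rpow_nonneg (by positivity) _
  have hx0 : (0:ℝ) ≤ x := h0.trans hx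
  have h1 : lam / c ≤ x ^ α := by
    have h2 := Real.rpow_le_rpow h0 hx hα.le
    rwa [one_div, Real.rpow_inv_rpow (by positivity) hα.ne'] at h2
  rw [div_le_iff₀ hc] at h1
  exact max_eq_left (by nlinarith)

lemma myFanti {α c lam : ℝ} (hα : 0 < α) (hc : 0 < c) (s : Set ℝ) (hs : s ⊆ Set.Ici 0) :
    AntitoneOn (fun x : ℝ => max 0 (lam - c * x ^ α)) s := by
  intro x hx y hy hxy
  have hx0 : (0:ℝ) ≤ x := hs hx
  have h := Real.rpow_le_rpow hx0 hxy hα.le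
  exact max_le_max le_rfl (by nlinarith)

lemma aux_summable {α c : ℝ} (lam : ℝ) (hα : 0 < α) (hc : 0 < c) (hlam : 0 < lam) :
    Summable (fun n : ℕ => max 0 (lam - c * ((n:ℝ)+1) ^ α)) := by
  set R : ℝ := (lam/c) ^ (1/α) with hR
  refine summable_of_ne_finset_zero (s := Finset.range (⌈R⌉₊ + 1)) fun n hn => ?_
  rw [Finset.mem_range, not_lt] at hn
  apply myFzero hα hc hlam
  have h1 : R ≤ (⌈R⌉₊ + 1 : ℕ) := by
    push_cast
    linarith [Nat.le_ceil R]
  have h2 : ((⌈R⌉₊ + 1 : ℕ) : ℝ) ≤ (n:ℝ) + 1 := by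
    have := (Nat.cast_le (α := ℝ)).2 hn
    push_cast at this ⊢
    linarith
  linarith

set_option maxHeartbeats 1000000 in
lemma aux_sandwich {α c : ℝ} (lam : ℝ) (hα : 0 < α) (hc : 0 < c) (hlam : 0 < lam) :
    α/(1+α) * c^(-(1/α)) * lam^(1+1/α) - lam ≤ (∑' n:ℕ, max 0 (lam - c * ((n:ℝ)+1) ^ α)) ∧
    (∑' n:ℕ, max 0 (lam - c * ((n:ℝ)+1) ^ α)) ≤ α/(1+α) * c^(-(1/α)) * lam^(1+1/α) := by
  set f : ℝ → ℝ := fun x => max 0 (lam - c * x ^ α) with hf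
  set R : ℝ := (lam/c) ^ (1/α) with hR
  have hRpos : 0 < R := rpow_pos_of_pos (by positivity) _
  set M : ℕ := ⌈R⌉₊ + 1 with hM
  have hRM : R ≤ (M:ℝ) := by
    rw [hM]; push_cast; linarith [Nat.le_ceil R]
  have hM0 : (0:ℝ) ≤ (M:ℝ) := le_trans hRpos.le hRM
  -- the tsum is a finite sum
  have hsupp : ∀ n : ℕ, n ∉ Finset.range M → f ((n:ℝ)+1) = 0 := by
    intro n hn
    rw [Finset.mem_range, not_lt] at hn
    apply myFzero hα hc hlam
    have := (Nat.cast_le (α := ℝ)).2 hn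
    linarith
  have htsum : (∑' n:ℕ, max 0 (lam - c * ((n:ℝ)+1) ^ α)) = ∑ n ∈ Finset.range M, f ((n:ℝ)+1) :=
    tsum_eq_sum hsupp
  -- antitone
  have hanti : AntitoneOn f (Set.Icc (0:ℝ) (0 + (M:ℕ))) :=
    myFanti hα hc _ (fun x hx => hx.1)
  have hlow := hanti.sum_le_integral
  have hup := hanti.integral_le_sum
  -- value of the integral
  have hRα : R ^ α = lam / c := by
    rw [hR, one_div, Real.rpow_inv_rpow (by positivity) hα.ne']
  have hIval : (∫ x in (0:ℝ)..(M:ℝ), f x) = α/(1+α) * c^(-(1/α)) * lam^(1+1/α) := by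
    rw [← intervalIntegral.integral_add_adjacent_intervals (a := (0:ℝ)) (b := R) (c := (M:ℝ))
      ((myFcont hα c lam).intervalIntegrable _ _) ((myFcont hα c lam).intervalIntegrable _ _)]
    have h2 : (∫ x in R..(M:ℝ), f x) = 0 := by
      rw [← intervalIntegral.integral_zero (a := R) (b := (M:ℝ)) (E := ℝ)]
      apply intervalIntegral.integral_congr
      intro x hx
      rw [Set.uIcc_of_le hRM] at hx
      exact myFzero hα hc hlam hx.1
    have h1 : (∫ x in (0:ℝ)..R, f x) = ∫ x in (0:ℝ)..R, (lam - c * x ^ α) := by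
      apply intervalIntegral.integral_congr
      intro x hx
      rw [Set.uIcc_of_le hRpos.le] at hx
      have hx0 : (0:ℝ) ≤ x := hx.1
      have hxa : x ^ α ≤ lam / c := by
        have h3 := Real.rpow_le_rpow hx0 hx.2 hα.le
        rwa [hRα] at h3
      have h4 : c * x ^ α ≤ lam := by
        have := mul_le_mul_of_nonneg_left hxa hc.le
        rw [mul_div_cancel₀ _ hc.ne'] at this
        exact this
      exact max_eq_right (by linarith)
    rw [h1, h2, add_zero,
      intervalIntegral.integral_sub (g := fun x : ℝ => c * x ^ α) intervalIntegrable_const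
        ((continuous_const.mul (Real.continuous_rpow_const hα.le)).intervalIntegrable _ _),
      intervalIntegral.integral_const, intervalIntegral.integral_const_mul,
      integral_rpow (Or.inl (by linarith : (-1:ℝ) < α))]
    have hz : (0:ℝ) ^ (α + 1) = 0 := Real.zero_rpow (by positivity)
    have hRa1 : R ^ (α + 1) = (lam / c) * R := by
      rw [Real.rpow_add hRpos, Real.rpow_one, hRα]
    rw [hz, hRa1]
    -- now pure algebra
    have hlamR : lam * R = c ^ (-(1/α)) * lam ^ (1 + 1/α) := by
      rw [hR, Real.div_rpow hlam.le hc.le, Real.rpow_add hlam, Real.rpow_one,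
        Real.rpow_neg hc.le]
      field_simp
      try ring
    have hca : (0:ℝ) < 1 + α := by linarith
    rw [smul_eq_mul, mul_assoc, ← hlamR]
    field_simp
    try ring
  -- translate the Riemann-sum bounds
  simp only [zero_add] at hlow hup
  have hcastM : ∀ i : ℕ, f ((i+1 : ℕ) : ℝ) = f ((i:ℝ)+1) := by
    intro i; push_cast; ring_nf
  simp only [hcastM] at hlow
  rw [hIval] at hlow hup
  have hf0 : f 0 = lam := by
    simp only [hf, Real.zero_rpow hα.ne', mul_zero, sub_zero]
    exact max_eq_right hlam.le
  have hsplit : ∑ i ∈ Finset.range M, f (i:ℝ)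
      = (∑ i ∈ Finset.range ⌈R⌉₊, f ((i:ℝ)+1)) + lam := by
    rw [hM, Finset.sum_range_succ' (fun i : ℕ => f (i:ℝ)) ⌈R⌉₊]
    push_cast
    rw [hf0]
  have hmono : (∑ i ∈ Finset.range ⌈R⌉₊, f ((i:ℝ)+1)) ≤ ∑ i ∈ Finset.range M, f ((i:ℝ)+1) :=
    Finset.sum_le_sum_of_subset_of_nonneg (Finset.range_subset_range.2 (Nat.le_succ _))
      (fun i _ _ => le_max_left _ _)
  constructor
  · rw [htsum]
    rw [hsplit] at hup
    linarith
  · rw [htsum]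
    exact hlow

set_option maxHeartbeats 1600000 in
theorem stmt_2 (a : ℕ → ℝ) (ha : Monotone a) (α C : ℝ) (hα : 0 < α) (hC : 0 < C)
    (haAsym : (fun n : ℕ => a n - C * (n : ℝ) ^ α) =o[atTop] fun n : ℕ => (n : ℝ) ^ α) :
    (fun lam : ℝ =>
        (∑' n : ℕ, max 0 (lam - a (n + 1)))
          - α / (1 + α) * C ^ (-(1 / α)) * lam ^ (1 + 1 / α))
      =o[atTop] fun lam : ℝ => lam ^ (1 + 1 / α) := by
  have hα1 : (0:ℝ) < 1 + α := by linarith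
  have hK0 : 0 < α / (1 + α) * C ^ (-(1 / α)) := by positivity
  set K : ℝ := α / (1 + α) * C ^ (-(1 / α)) with hKdef
  -- a tends to infinity
  have hnpow : Tendsto (fun n : ℕ => ((n:ℝ)) ^ α) atTop atTop :=
    (tendsto_rpow_atTop hα).comp tendsto_natCast_atTop_atTop
  have haTop : Tendsto a atTop atTop := by
    apply tendsto_atTop_mono' atTop ?_ (hnpow.const_mul_atTop (half_pos hC))
    filter_upwards [Asymptotics.isLittleO_iff.mp haAsym (half_pos hC)] with n hn
    rw [Real.norm_eq_abs, Real.norm_eq_abs,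
      abs_of_nonneg (rpow_nonneg (Nat.cast_nonneg n) α)] at hn
    have h2 := abs_le.1 hn
    have h3 := h2.1
    show C / 2 * (n:ℝ) ^ α ≤ a n
    linarith
  have hgsum : ∀ lam : ℝ, Summable (fun n : ℕ => max 0 (lam - a (n+1))) := by
    intro lam
    have hev : ∀ᶠ n : ℕ in atTop, max 0 (lam - a (n+1)) = 0 := by
      filter_upwards [(haTop.comp (tendsto_add_atTop_nat 1)).eventually_ge_atTop lam] with n hn
      simp only [Function.comp] at hn
      exact max_eq_left (by linarith)
    obtain ⟨m, hm⟩ := eventually_atTop.1 hev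
    exact summable_of_ne_finset_zero (s := Finset.range m)
      (fun n hn => hm n (by rw [Finset.mem_range, not_lt] at hn; exact hn))
  rw [Asymptotics.isLittleO_iff]
  intro ε hε
  -- choose δ
  have hcont1 : Tendsto (fun d : ℝ => (1 - d) ^ (-(1/α))) (𝓝 0) (𝓝 1) := by
    have hc : ContinuousAt (fun d : ℝ => (1 - d) ^ (-(1/α))) 0 :=
      (continuousAt_const.sub continuousAt_id).rpow_const (Or.inl (by norm_num))
    have h0 : ((1:ℝ) - 0) ^ (-(1/α)) = 1 := by rw [sub_zero, Real.one_rpow]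
    simpa [h0] using hc.tendsto
  have hcont2 : Tendsto (fun d : ℝ => (1 + d) ^ (-(1/α))) (𝓝 0) (𝓝 1) := by
    have hc : ContinuousAt (fun d : ℝ => (1 + d) ^ (-(1/α))) 0 :=
      (continuousAt_const.add continuousAt_id).rpow_const (Or.inl (by norm_num))
    have h0 : ((1:ℝ) + 0) ^ (-(1/α)) = 1 := by rw [add_zero, Real.one_rpow]
    simpa [h0] using hc.tendsto
  have hev2 : ∀ᶠ d : ℝ in 𝓝 0, K * |(1 - d) ^ (-(1/α)) - 1| ≤ ε/4 ∧
      K * |(1 + d) ^ (-(1/α)) - 1| ≤ ε/4 := by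
    have e1 := Metric.tendsto_nhds.1 hcont1 (ε/(4*K)) (by positivity)
    have e2 := Metric.tendsto_nhds.1 hcont2 (ε/(4*K)) (by positivity)
    filter_upwards [e1, e2] with d h1 h2
    rw [Real.dist_eq] at h1 h2
    constructor
    · calc K * |(1-d)^(-(1/α)) - 1| ≤ K * (ε/(4*K)) :=
            mul_le_mul_of_nonneg_left h1.le hK0.le
        _ = ε/4 := by field_simp
    · calc K * |(1+d)^(-(1/α)) - 1| ≤ K * (ε/(4*K)) :=
            mul_le_mul_of_nonneg_left h2.le hK0.le
        _ = ε/4 := by field_simp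
  rw [Metric.eventually_nhds_iff] at hev2
  obtain ⟨r, hr0, hr⟩ := hev2
  set δ : ℝ := min (r/2) (1/2) with hδdef
  have hδ0 : 0 < δ := by rw [hδdef]; positivity
  have hδhalf : δ ≤ 1/2 := min_le_right _ _
  obtain ⟨hδ1, hδ2⟩ := hr (show dist δ 0 < r by
    rw [Real.dist_eq, sub_zero, abs_of_pos hδ0]
    calc δ ≤ r/2 := min_le_left _ _
      _ < r := by linarith)
  -- N from the asymptotic
  obtain ⟨N, hN⟩ := eventually_atTop.1 (Asymptotics.isLittleO_iff.mp haAsym (mul_pos hδ0 hC))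
  have hband : ∀ n : ℕ, N ≤ n → (1-δ)*C*(n:ℝ)^α ≤ a n ∧ a n ≤ (1+δ)*C*(n:ℝ)^α := by
    intro n hn
    have h := hN n hn
    rw [Real.norm_eq_abs, Real.norm_eq_abs,
      abs_of_nonneg (rpow_nonneg (Nat.cast_nonneg n) α)] at h
    have h2 := abs_le.1 h
    constructor <;> nlinarith [h2.1, h2.2]
  have hcm : 0 < (1-δ)*C := by nlinarith
  have hcp : 0 < (1+δ)*C := by nlinarith
  -- indicator sums
  have hindsum : ∀ x : ℝ, Summable (fun n : ℕ => if n < N then x else 0) :=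
    fun x => summable_of_ne_finset_zero (s := Finset.range N)
      (fun n hn => if_neg (by rwa [Finset.mem_range] at hn))
  have hindval : ∀ x : ℝ, (∑' n : ℕ, if n < N then x else 0) = N * x := by
    intro x
    rw [tsum_eq_sum (s := Finset.range N)
      (fun n hn => if_neg (by rwa [Finset.mem_range] at hn)),
      Finset.sum_congr rfl (fun n hn => if_pos (Finset.mem_range.1 hn)),
      Finset.sum_const, Finset.card_range, nsmul_eq_mul]
  -- main eventual estimate
  have hrp : Tendsto (fun x : ℝ => x ^ (1/α)) atTop atTop := tendsto_rpow_atTop (by positivity)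
  filter_upwards [eventually_ge_atTop (1:ℝ), eventually_ge_atTop (|a 1|),
      hrp.eventually_ge_atTop ((4*(N:ℝ)+4)/ε)] with lam hl1 hlA hl3
  have hlam : 0 < lam := lt_of_lt_of_le one_pos hl1
  obtain ⟨hlowP, hupP⟩ := aux_sandwich (c := (1+δ)*C) lam hα hcp hlam
  obtain ⟨hlowM, hupM⟩ := aux_sandwich (c := (1-δ)*C) lam hα hcm hlam
  -- upper bound on S
  have hA1 : ∀ n : ℕ, max 0 (lam - a (n+1)) ≤
      max 0 (lam - (1-δ)*C*((n:ℝ)+1)^α) + (if n < N then lam + |a 1| else 0) := by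
    intro n
    by_cases hn : n < N
    · rw [if_pos hn]
      have h1 : a 1 ≤ a (n+1) := ha (Nat.le_add_left 1 n)
      have h2 : max 0 (lam - a (n+1)) ≤ lam + |a 1| :=
        max_le (by linarith [abs_nonneg (a 1)]) (by linarith [neg_abs_le (a 1)])
      have h3 : 0 ≤ max 0 (lam - (1-δ)*C*((n:ℝ)+1)^α) := le_max_left _ _
      linarith
    · rw [if_neg hn, add_zero]
      push_neg at hn
      have hb := (hband (n+1) (by omega)).1
      have hcast : ((n+1 : ℕ):ℝ) = (n:ℝ)+1 := by push_cast; ring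
      rw [hcast] at hb
      exact max_le_max le_rfl (by linarith)
  have hSup : (∑' n : ℕ, max 0 (lam - a (n + 1))) ≤
      α/(1+α) * ((1-δ)*C)^(-(1/α)) * lam^(1+1/α) + N*(lam + |a 1|) := by
    calc (∑' n : ℕ, max 0 (lam - a (n + 1)))
        ≤ ∑' n : ℕ, (max 0 (lam - (1-δ)*C*((n:ℝ)+1)^α) + (if n < N then lam + |a 1| else 0)) :=
          Summable.tsum_le_tsum hA1 (hgsum lam) ((aux_summable lam hα hcm hlam).add (hindsum _))
      _ = (∑' n : ℕ, max 0 (lam - (1-δ)*C*((n:ℝ)+1)^α))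
            + ∑' n : ℕ, (if n < N then lam + |a 1| else 0) :=
          Summable.tsum_add (aux_summable lam hα hcm hlam) (hindsum _)
      _ ≤ _ := by rw [hindval]; exact add_le_add_left hupM _
  -- lower bound on S
  have hA2 : ∀ n : ℕ, max 0 (lam - (1+δ)*C*((n:ℝ)+1)^α) ≤
      max 0 (lam - a (n+1)) + (if n < N then lam else 0) := by
    intro n
    by_cases hn : n < N
    · rw [if_pos hn]
      have hp : (0:ℝ) < ((n:ℝ)+1)^α := rpow_pos_of_pos (by positivity) α
      have h1 : max 0 (lam - (1+δ)*C*((n:ℝ)+1)^α) ≤ lam := max_le hlam.le (by nlinarith)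
      linarith [le_max_left (0:ℝ) (lam - a (n+1))]
    · rw [if_neg hn, add_zero]
      push_neg at hn
      have hb := (hband (n+1) (by omega)).2
      have hcast : ((n+1 : ℕ):ℝ) = (n:ℝ)+1 := by push_cast; ring
      rw [hcast] at hb
      exact max_le_max le_rfl (by linarith)
  have hSlo : α/(1+α) * ((1+δ)*C)^(-(1/α)) * lam^(1+1/α) - lam ≤
      (∑' n : ℕ, max 0 (lam - a (n + 1))) + N*lam := by
    calc α/(1+α) * ((1+δ)*C)^(-(1/α)) * lam^(1+1/α) - lam
        ≤ ∑' n : ℕ, max 0 (lam - (1+δ)*C*((n:ℝ)+1)^α) := hlowP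
      _ ≤ ∑' n : ℕ, (max 0 (lam - a (n+1)) + if n < N then lam else 0) :=
          Summable.tsum_le_tsum hA2 (aux_summable lam hα hcp hlam) ((hgsum lam).add (hindsum _))
      _ = _ := by rw [Summable.tsum_add (hgsum lam) (hindsum _), hindval]
  -- rewrite the coefficients
  have hIM : α/(1+α) * ((1-δ)*C)^(-(1/α)) = K * (1-δ)^(-(1/α)) := by
    rw [hKdef, Real.mul_rpow (by linarith : (0:ℝ) ≤ 1-δ) hC.le]; ring
  have hIP : α/(1+α) * ((1+δ)*C)^(-(1/α)) = K * (1+δ)^(-(1/α)) := by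
    rw [hKdef, Real.mul_rpow (by linarith : (0:ℝ) ≤ 1+δ) hC.le]; ring
  rw [hIM] at hSup
  rw [hIP] at hSlo
  -- numeric facts
  have hplam : 0 < lam ^ (1+1/α) := rpow_pos_of_pos hlam _
  have hppow : lam ^ (1+1/α) = lam * lam^(1/α) := by
    rw [Real.rpow_add hlam, Real.rpow_one]
  have hNlam : (4*(N:ℝ)+4) * lam ≤ ε * lam^(1+1/α) := by
    rw [div_le_iff₀ hε] at hl3
    rw [hppow]
    linarith [mul_le_mul_of_nonneg_right hl3 hlam.le]
  have hb1 : K * ((1-δ)^(-(1/α)) - 1) * lam^(1+1/α) ≤ ε/4 * lam^(1+1/α) := by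
    have h := (mul_le_mul_of_nonneg_left (le_abs_self ((1-δ)^(-(1/α)) - 1)) hK0.le).trans hδ1
    exact mul_le_mul_of_nonneg_right h hplam.le
  have hb2 : -(ε/4 * lam^(1+1/α)) ≤ K * ((1+δ)^(-(1/α)) - 1) * lam^(1+1/α) := by
    have h1 := mul_le_mul_of_nonneg_left (neg_abs_le ((1+δ)^(-(1/α)) - 1)) hK0.le
    have h2 : -(ε/4) ≤ K * ((1+δ)^(-(1/α)) - 1) := by
      rw [mul_neg] at h1
      linarith
    nlinarith [mul_le_mul_of_nonneg_right h2 hplam.le]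
  have hNa : (N:ℝ) * |a 1| ≤ (N:ℝ) * lam := mul_le_mul_of_nonneg_left hlA (Nat.cast_nonneg N)
  have hN0 : (0:ℝ) ≤ (N:ℝ) := Nat.cast_nonneg N
  rw [Real.norm_eq_abs, Real.norm_eq_abs, abs_of_pos hplam, abs_le]
  constructor
  · nlinarith [hSlo, hb2, hNlam, hlam.le, hplam.le]
  · nlinarith [hSup, hb1, hNlam, hNa, hlam.le, hplam.le]
end

section
/- Let $\gamma_0>0$ and suppose $F:(0,\infty)\to\mathbb{R}$ is given by $F(\lambda) = \sum_{n\ge1}(\lambda-\lambda_n)_+^{\gamma_0}$ for a nondecreasing sequence $\lambda_n\to\infty$, and that $F(\lambda) = A\lambda^{\gamma_0+\frac d2} + B\lambda^{\gamma_0+\frac{d-1}{2}}+o(\lambda^{\gamma_0+\frac{d-1}{2}})$ as $\lambda\to\infty$ for constants $A,B$ and $d\ge1$. Then for every $\gamma>\gamma_0$ the Riesz mean $F_\gamma(\lambda):=\sum_{n\ge1}(\lambda-\lambda_n)_+^{\gamma}$ satisfies $F_\gamma(\lambda) = \frac{\Gamma(\gamma+1)\Gamma(\gamma_0+\frac d2+1)}{\Gamma(\gamma_0+1)\Gamma(\gamma+\frac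 d2+1)}A\lambda^{\gamma+\frac d2} + \frac{\Gamma(\gamma+1)\Gamma(\gamma_0+\frac{d-1}{2}+1)}{\Gamma(\gamma_0+1)\Gamma(\gamma+\frac{d-1}{2}+1)}B\lambda^{\gamma+\frac{d-1}{2}}+o(\lambda^{\gamma+\frac{d-1}{2}})$. -/
open Filter Real MeasureTheory Set intervalIntegral

noncomputable def gp (p y : ℝ) : ℝ := (max 0 y) ^ p

lemma gp_nonneg (p y : ℝ) : 0 ≤ gp p y := Real.rpow_nonneg (le_max_left _ _) _

lemma gp_of_nonpos {p y : ℝ} (hp : 0 < p) (hy : y ≤ 0) : gp p y = 0 := by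
  unfold gp
  rw [max_eq_left hy, Real.zero_rpow hp.ne']

lemma gp_of_nonneg {p y : ℝ} (hy : 0 ≤ y) : gp p y = y ^ p := by
  unfold gp; rw [max_eq_right hy]

lemma gp_mono {p : ℝ} (hp : 0 ≤ p) : Monotone (gp p) := fun x y h =>
  Real.rpow_le_rpow (le_max_left _ _) (max_le_max le_rfl h) hp

lemma gp_cont {p : ℝ} (hp : 0 < p) : Continuous (gp p) := by
  have hmax : Continuous (fun y : ℝ => max 0 y) := continuous_const.max continuous_id
  have hr : Continuous (fun z : ℝ => z ^ p) :=
    continuous_iff_continuousAt.2 fun z => Real.continuousAt_rpow_const z p (Or.inr hp.le)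
  exact hr.comp hmax
noncomputable def betaR (a b : ℝ) : ℝ := ∫ s in (0:ℝ)..1, s ^ (a-1) * (1-s) ^ b

lemma betaR_eq {a b : ℝ} (ha : 0 < a) (hb : 0 < b) :
    betaR a b = Real.Gamma a * Real.Gamma (b+1) / Real.Gamma (a+b+1) := by
  have h1 : ((betaR a b : ℝ) : ℂ) = Complex.betaIntegral a (b+1) := by
    rw [betaR, Complex.betaIntegral, ← intervalIntegral.integral_ofReal]
    refine intervalIntegral.integral_congr_ae ?_
    have : ∀ᵐ s : ℝ, s ∈ Set.uIoc (0:ℝ) 1 → 0 ≤ s ∧ s ≤ 1 := by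
      filter_upwards with s hs
      rw [Set.uIoc_of_le zero_le_one] at hs
      exact ⟨hs.1.le, hs.2⟩
    filter_upwards [this] with s hs hmem
    obtain ⟨h0, h1'⟩ := hs hmem
    push_cast
    rw [Complex.ofReal_cpow h0, Complex.ofReal_cpow (by linarith)]
    push_cast
    ring_nf
  have h2 : Complex.Gamma a * Complex.Gamma (b+1) =
      Complex.Gamma (a + (b+1)) * Complex.betaIntegral a (b+1) := by
    apply Complex.Gamma_mul_Gamma_eq_betaIntegral <;> simp [ha, hb] <;> positivity
  have hg : Complex.Gamma (↑a + (↑b+1)) = ((Real.Gamma (a+b+1) : ℝ) : ℂ) := by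
    rw [show (↑a + (↑b+1) : ℂ) = ((a+b+1 : ℝ) : ℂ) by push_cast; ring, Complex.Gamma_ofReal]
  have hgne : (Real.Gamma (a+b+1)) ≠ 0 := (Real.Gamma_pos_of_pos (by linarith)).ne'
  have := h2
  rw [hg] at this
  have h3 : ((betaR a b : ℝ) : ℂ) = ((Real.Gamma a * Real.Gamma (b+1) / Real.Gamma (a+b+1) : ℝ) : ℂ) := by
    rw [h1]
    have : Complex.betaIntegral ↑a (↑b+1) =
        Complex.Gamma a * Complex.Gamma (↑b+1) / ((Real.Gamma (a+b+1) : ℝ) : ℂ) := by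
      have hgne' : ((Real.Gamma (a+b+1) : ℝ) : ℂ) ≠ 0 := by exact_mod_cast hgne
      rw [eq_div_iff hgne']
      linear_combination -this
    rw [this, show ((b:ℂ)+1) = ((b+1:ℝ):ℂ) by push_cast; ring, Complex.Gamma_ofReal,
      Complex.Gamma_ofReal]
    push_cast
    ring
  exact_mod_cast h3


lemma betaR_pos {a b : ℝ} (ha : 0 < a) (hb : 0 < b) : 0 < betaR a b := by
  rw [betaR_eq ha hb]
  have h1 := Real.Gamma_pos_of_pos ha
  have h2 := Real.Gamma_pos_of_pos (by linarith : (0:ℝ) < b + 1)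
  have h3 := Real.Gamma_pos_of_pos (by linarith : (0:ℝ) < a + b + 1)
  positivity

lemma lemA_integrable {a p : ℝ} (ha : 0 < a) (hp : 0 < p) (x : ℝ) :
    IntegrableOn (fun τ => τ ^ (a-1) * gp p (x - τ)) (Ioi 0) := by
  rcases le_or_gt x 0 with hx | hx
  · refine (integrableOn_zero (ε' := ℝ)).congr_fun (fun τ hτ => ?_) measurableSet_Ioi
    rw [gp_of_nonpos hp (by simp at hτ; linarith), mul_zero]
  · rw [← Set.Ioc_union_Ioi_eq_Ioi hx.le, integrableOn_union]
    constructor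
    · have h1 : IntegrableOn (fun τ : ℝ => τ ^ (a-1)) (Ioc 0 x) volume := by
        have := intervalIntegral.intervalIntegrable_rpow' (a := 0) (b := x)
          (r := a - 1) (by linarith)
        rwa [intervalIntegrable_iff_integrableOn_Ioc_of_le hx.le] at this
      have h2 : IntegrableOn (fun τ : ℝ => gp p (x - τ) * τ ^ (a-1)) (Ioc 0 x) volume := by
        refine MeasureTheory.Integrable.bdd_mul h1 (c := gp p x)
          (((gp_cont hp).comp (continuous_const.sub continuous_id)).aestronglyMeasurable) ?_
        refine (MeasureTheory.ae_restrict_iff' measurableSet_Ioc).2 ?_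
        filter_upwards with τ hτ
        rw [Real.norm_eq_abs, abs_of_nonneg (gp_nonneg _ _)]
        exact gp_mono hp.le (by linarith [hτ.1])
      exact h2.congr_fun (fun τ _ => mul_comm _ _) measurableSet_Ioc
    · refine (integrableOn_zero (ε' := ℝ)).congr_fun (fun τ hτ => ?_) measurableSet_Ioi
      rw [gp_of_nonpos hp (by simp at hτ; linarith), mul_zero]

lemma lemA_value {a p : ℝ} (ha : 0 < a) (hp : 0 < p) (x : ℝ) :
    ∫ τ in Ioi (0:ℝ), τ ^ (a-1) * gp p (x - τ) = betaR a p * gp (a+p) x := by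
  rcases le_or_gt x 0 with hx | hx
  · rw [gp_of_nonpos (by linarith) hx, mul_zero]
    rw [MeasureTheory.setIntegral_congr_fun measurableSet_Ioi
      (g := fun _ => (0:ℝ)) (fun τ hτ => by
        rw [gp_of_nonpos hp (by simp at hτ; linarith), mul_zero])]
    simp
  · have hsplit : ∫ τ in Ioi (0:ℝ), τ ^ (a-1) * gp p (x - τ)
        = ∫ τ in Ioc (0:ℝ) x, τ ^ (a-1) * gp p (x - τ) := by
      rw [← Set.Ioc_union_Ioi_eq_Ioi hx.le]
      rw [MeasureTheory.setIntegral_union (Set.Ioc_disjoint_Ioi le_rfl) measurableSet_Ioi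
        ((lemA_integrable ha hp x).mono_set (by rw [← Set.Ioc_union_Ioi_eq_Ioi hx.le]; exact Set.subset_union_left))
        ((lemA_integrable ha hp x).mono_set (by rw [← Set.Ioc_union_Ioi_eq_Ioi hx.le]; exact Set.subset_union_right))]
      have : ∫ τ in Ioi x, τ ^ (a-1) * gp p (x - τ) = 0 := by
        rw [MeasureTheory.setIntegral_congr_fun measurableSet_Ioi
          (g := fun _ => (0:ℝ)) (fun τ hτ => by
            rw [gp_of_nonpos hp (by simp at hτ; linarith), mul_zero])]
        simp
      rw [this, add_zero]
    rw [hsplit, ← intervalIntegral.integral_of_le hx.le]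
    have hsub := intervalIntegral.smul_integral_comp_mul_left
      (f := fun τ => τ ^ (a-1) * gp p (x - τ)) (a := 0) (b := 1) x
    rw [mul_zero, mul_one] at hsub
    rw [← hsub]
    have hcongr : ∫ s in (0:ℝ)..1, (x*s) ^ (a-1) * gp p (x - x*s)
        = (x ^ (a-1) * x ^ p) * betaR a p := by
      rw [betaR, ← intervalIntegral.integral_const_mul]
      refine intervalIntegral.integral_congr_ae ?_
      have hae : ∀ᵐ s : ℝ, s ∈ Set.uIoc (0:ℝ) 1 → 0 < s ∧ s ≤ 1 := by
        filter_upwards with s hs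
        rw [Set.uIoc_of_le zero_le_one] at hs
        exact ⟨hs.1, hs.2⟩
      filter_upwards [hae] with s hs hmem
      obtain ⟨h0, h1'⟩ := hs hmem
      rw [Real.mul_rpow hx.le h0.le, gp_of_nonneg (by nlinarith)]
      have : x - x*s = x * (1-s) := by ring
      rw [this, Real.mul_rpow hx.le (by linarith)]
      ring
    rw [hcongr, smul_eq_mul, gp_of_nonneg hx.le]
    have hxx : x ^ (1:ℝ) * x ^ (a-1) * x ^ p = x ^ (a+p) := by
      rw [← Real.rpow_add hx, ← Real.rpow_add hx]
      norm_num
    rw [← hxx, Real.rpow_one]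
    ring

set_option maxHeartbeats 2000000 in
theorem stmt_16 (e : ℕ → ℝ) (he : Monotone e) (heTop : Tendsto e atTop atTop)
    (γ₀ : ℝ) (hγ₀ : 0 < γ₀) (d : ℝ) (hd : 1 ≤ d) (A B : ℝ)
    (hF : (fun lam : ℝ =>
        (∑' n : ℕ, max 0 (lam - e n) ^ γ₀)
          - A * lam ^ (γ₀ + d / 2) - B * lam ^ (γ₀ + (d - 1) / 2))
      =o[atTop] fun lam : ℝ => lam ^ (γ₀ + (d - 1) / 2)) :
    ∀ γ : ℝ, γ₀ < γ →
      (fun lam : ℝ =>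
          (∑' n : ℕ, max 0 (lam - e n) ^ γ)
            - Real.Gamma (γ + 1) * Real.Gamma (γ₀ + d / 2 + 1)
                / (Real.Gamma (γ₀ + 1) * Real.Gamma (γ + d / 2 + 1)) * A * lam ^ (γ + d / 2)
            - Real.Gamma (γ + 1) * Real.Gamma (γ₀ + (d - 1) / 2 + 1)
                / (Real.Gamma (γ₀ + 1) * Real.Gamma (γ + (d - 1) / 2 + 1)) * B
                  * lam ^ (γ + (d - 1) / 2))
        =o[atTop] fun lam : ℝ => lam ^ (γ + (d - 1) / 2) := by
  intro γ hγ
  have hγpos : 0 < γ := hγ₀.trans hγ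
  set a := γ - γ₀ with ha_def
  have ha : 0 < a := sub_pos.2 hγ
  set p1 := γ₀ + d/2 with hp1_def
  set q := γ₀ + (d-1)/2 with hq_def
  have hp1 : 0 < p1 := by rw [hp1_def]; linarith
  have hq : 0 < q := by rw [hq_def]; linarith
  have e1 : a + γ₀ = γ := by rw [ha_def]; ring
  have e2 : a + p1 = γ + d/2 := by rw [ha_def, hp1_def]; ring
  have e3 : a + q = γ + (d-1)/2 := by rw [ha_def, hq_def]; ring
  set F : ℝ → ℝ := fun μ => ∑' n, gp γ₀ (μ - e n) with hF_def
  have hN : ∀ μ : ℝ, ∃ N : ℕ, ∀ n, N ≤ n → μ ≤ e n := by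
    intro μ
    exact Filter.eventually_atTop.1 (heTop.eventually_ge_atTop μ)
  have hFsum : ∀ (p : ℝ), 0 < p → ∀ (μ : ℝ) (N : ℕ), (∀ n, N ≤ n → μ ≤ e n) →
      ∑' n, gp p (μ - e n) = ∑ n ∈ Finset.range N, gp p (μ - e n) := by
    intro p hp μ N h
    refine tsum_eq_sum (fun n hn => gp_of_nonpos hp ?_)
    simp only [Finset.mem_range, not_lt] at hn
    linarith [h n hn]
  have hFmono : Monotone F := by
    intro x y hxy
    obtain ⟨N, hN'⟩ := hN y
    show (∑' n, gp γ₀ (x - e n)) ≤ ∑' n, gp γ₀ (y - e n)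
    rw [hFsum γ₀ hγ₀ x N (fun n hn => hxy.trans (hN' n hn)), hFsum γ₀ hγ₀ y N hN']
    exact Finset.sum_le_sum fun n _ => gp_mono hγ₀.le (by linarith)
  have hFnonneg : ∀ μ, 0 ≤ F μ := fun μ => tsum_nonneg fun n => gp_nonneg _ _
  -- integrability of F-part
  have hFint : ∀ lam : ℝ, IntegrableOn (fun τ => τ ^ (a-1) * F (lam - τ)) (Ioi 0) := by
    intro lam
    obtain ⟨N, hN'⟩ := hN lam
    have hint : IntegrableOn
        (fun τ => ∑ n ∈ Finset.range N, τ ^ (a-1) * gp γ₀ (lam - e n - τ)) (Ioi 0) :=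
      MeasureTheory.integrable_finset_sum _ fun n _ => lemA_integrable ha hγ₀ (lam - e n)
    refine hint.congr_fun (fun τ hτ => ?_) measurableSet_Ioi
    have hτ' : 0 < τ := hτ
    beta_reduce
    rw [← Finset.mul_sum]
    congr 1
    show _ = ∑' n, gp γ₀ (lam - τ - e n)
    rw [hFsum γ₀ hγ₀ (lam - τ) N (fun n hn => by linarith [hN' n hn])]
    exact Finset.sum_congr rfl fun n _ => by rw [sub_right_comm]
  -- key identity
  have hkey : ∀ lam : ℝ, (∑' n, gp γ (lam - e n))
      = (betaR a γ₀)⁻¹ * ∫ τ in Ioi (0:ℝ), τ ^ (a-1) * F (lam - τ) := by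
    intro lam
    obtain ⟨N, hN'⟩ := hN lam
    have hβ : betaR a γ₀ ≠ 0 := (betaR_pos ha hγ₀).ne'
    rw [hFsum γ hγpos lam N hN']
    have h1 : ∀ n ∈ Finset.range N, gp γ (lam - e n)
        = (betaR a γ₀)⁻¹ * ∫ τ in Ioi (0:ℝ), τ ^ (a-1) * gp γ₀ (lam - e n - τ) := by
      intro n _
      rw [show (fun τ : ℝ => τ ^ (a-1) * gp γ₀ (lam - e n - τ))
          = (fun τ : ℝ => τ ^ (a-1) * gp γ₀ ((lam - e n) - τ)) from rfl]
      rw [lemA_value ha hγ₀ (lam - e n), e1]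
      field_simp
    rw [Finset.sum_congr rfl h1, ← Finset.mul_sum]
    congr 1
    rw [← MeasureTheory.integral_finset_sum _ (fun n _ => lemA_integrable ha hγ₀ (lam - e n))]
    refine MeasureTheory.setIntegral_congr_fun measurableSet_Ioi (fun τ hτ => ?_)
    have hτ' : 0 < τ := hτ
    rw [← Finset.mul_sum]
    congr 1
    show _ = ∑' n, gp γ₀ (lam - τ - e n)
    rw [hFsum γ₀ hγ₀ (lam - τ) N (fun n hn => by linarith [hN' n hn])]
    exact Finset.sum_congr rfl fun n _ => by rw [sub_right_comm]
  set β₀ := betaR a γ₀ with hβ₀_def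
  have hβ₀ : 0 < β₀ := betaR_pos ha hγ₀
  set G : ℝ → ℝ := fun μ => F μ - A * gp p1 μ - B * gp q μ with hG_def
  have hGint : ∀ lam : ℝ, IntegrableOn (fun τ => τ ^ (a-1) * G (lam - τ)) (Ioi 0) := by
    intro lam
    have h := (((hFint lam).sub ((lemA_integrable ha hp1 lam).const_mul A)).sub
      ((lemA_integrable ha hq lam).const_mul B))
    refine MeasureTheory.IntegrableOn.congr_fun h (fun τ _ => ?_) measurableSet_Ioi
    simp only [Pi.sub_apply]
    show _ = τ ^ (a-1) * (F (lam - τ) - A * gp p1 (lam - τ) - B * gp q (lam - τ))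
    ring
  have hconst : ∀ p : ℝ, 0 < p →
      Real.Gamma (γ + 1) * Real.Gamma (p + 1)
        / (Real.Gamma (γ₀ + 1) * Real.Gamma (a + p + 1)) = betaR a p / β₀ := by
    intro p hp
    rw [hβ₀_def, betaR_eq ha hp, betaR_eq ha hγ₀, ← e1]
    have g1 := Real.Gamma_pos_of_pos ha
    have g2 := Real.Gamma_pos_of_pos (show (0:ℝ) < γ₀ + 1 by linarith)
    have g3 := Real.Gamma_pos_of_pos (show (0:ℝ) < a + γ₀ + 1 by linarith)
    have g4 := Real.Gamma_pos_of_pos (show (0:ℝ) < p + 1 by linarith)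
    have g5 := Real.Gamma_pos_of_pos (show (0:ℝ) < a + p + 1 by linarith)
    field_simp
  have hR : ∀ lam : ℝ, 0 < lam →
      (∑' n, gp γ (lam - e n))
        - Real.Gamma (γ+1) * Real.Gamma (p1+1)
            / (Real.Gamma (γ₀+1) * Real.Gamma (γ + d/2 + 1)) * A * lam ^ (γ + d/2)
        - Real.Gamma (γ+1) * Real.Gamma (q+1)
            / (Real.Gamma (γ₀+1) * Real.Gamma (γ + (d-1)/2 + 1)) * B * lam ^ (γ + (d-1)/2)
      = β₀⁻¹ * ∫ τ in Ioi (0:ℝ), τ ^ (a-1) * G (lam - τ) := by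
    intro lam hlam
    have hA : Real.Gamma (γ+1) * Real.Gamma (p1+1)
          / (Real.Gamma (γ₀+1) * Real.Gamma (γ + d/2 + 1)) * A * lam ^ (γ + d/2)
        = β₀⁻¹ * (A * ∫ τ in Ioi (0:ℝ), τ ^ (a-1) * gp p1 (lam - τ)) := by
      rw [lemA_value ha hp1 lam, show γ + d/2 + 1 = a + p1 + 1 by rw [← e2], hconst p1 hp1,
        gp_of_nonneg hlam.le, ← e2]
      field_simp
    have hB : Real.Gamma (γ+1) * Real.Gamma (q+1)
          / (Real.Gamma (γ₀+1) * Real.Gamma (γ + (d-1)/2 + 1)) * B * lam ^ (γ + (d-1)/2)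
        = β₀⁻¹ * (B * ∫ τ in Ioi (0:ℝ), τ ^ (a-1) * gp q (lam - τ)) := by
      rw [lemA_value ha hq lam, show γ + (d-1)/2 + 1 = a + q + 1 by rw [← e3], hconst q hq,
        gp_of_nonneg hlam.le, ← e3]
      field_simp
    rw [hkey lam, hA, hB, ← mul_sub, ← mul_sub]
    congr 1
    have hfun : (fun τ : ℝ => τ ^ (a-1) * G (lam - τ))
        = fun τ : ℝ => τ ^ (a-1) * F (lam - τ) - A * (τ ^ (a-1) * gp p1 (lam - τ))
            - B * (τ ^ (a-1) * gp q (lam - τ)) := by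
      funext τ
      show τ ^ (a-1) * (F (lam - τ) - A * gp p1 (lam - τ) - B * gp q (lam - τ)) = _
      ring
    have hf1 : IntegrableOn (fun τ : ℝ => τ ^ (a-1) * F (lam - τ)
        - A * (τ ^ (a-1) * gp p1 (lam - τ))) (Ioi 0) volume :=
      (hFint lam).sub ((lemA_integrable ha hp1 lam).const_mul A)
    rw [hfun, MeasureTheory.integral_sub hf1 ((lemA_integrable ha hq lam).const_mul B),
      MeasureTheory.integral_sub (hFint lam) ((lemA_integrable ha hp1 lam).const_mul A),
      MeasureTheory.integral_const_mul, MeasureTheory.integral_const_mul]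
  set e0 := min (e 0) 0 with he0_def
  have he0 : e0 ≤ 0 := min_le_right _ _
  have hGzero : ∀ μ : ℝ, μ ≤ e0 → G μ = 0 := by
    intro μ hμ
    have h1 : F μ = 0 := by
      show (∑' n, gp γ₀ (μ - e n)) = 0
      have hz : ∀ n : ℕ, gp γ₀ (μ - e n) = 0 := fun n =>
        gp_of_nonpos hγ₀ (by
          have h3 := he (Nat.zero_le n)
          have h2 : μ ≤ e 0 := hμ.trans (min_le_left _ _)
          linarith)
      rw [tsum_congr hz, tsum_zero]
    show F μ - A * gp p1 μ - B * gp q μ = 0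
    rw [h1, gp_of_nonpos hp1 (hμ.trans he0), gp_of_nonpos hq (hμ.trans he0)]
    ring
  have hLO : (fun lam : ℝ => β₀⁻¹ * ∫ τ in Ioi (0:ℝ), τ ^ (a-1) * G (lam - τ))
      =o[atTop] fun lam : ℝ => lam ^ (γ + (d-1)/2) := by
    rw [Asymptotics.isLittleO_iff]
    intro c hc
    set βq := betaR a q with hβq_def
    have hβq : 0 < βq := betaR_pos ha hq
    have hε : 0 < c * β₀ / (2 * βq) := by positivity
    obtain ⟨T0, hT0⟩ := Filter.eventually_atTop.1 (hF.def hε)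
    set T := max T0 1 with hT_def
    have hT1 : (1:ℝ) ≤ T := le_max_right _ _
    have hGsmall : ∀ μ : ℝ, T ≤ μ → |G μ| ≤ c * β₀ / (2 * βq) * μ ^ q := by
      intro μ hμ
      have hμ0 : (0:ℝ) < μ := lt_of_lt_of_le zero_lt_one (hT1.trans hμ)
      have h := hT0 μ ((le_max_left _ _).trans hμ)
      have hGμ : G μ = (∑' n : ℕ, max 0 (μ - e n) ^ γ₀) - A * μ ^ p1 - B * μ ^ q := by
        show F μ - A * gp p1 μ - B * gp q μ = _
        rw [gp_of_nonneg hμ0.le, gp_of_nonneg hμ0.le]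
        rfl
      rw [hGμ]
      rw [Real.norm_eq_abs, Real.norm_eq_abs,
        abs_of_nonneg (Real.rpow_nonneg hμ0.le _)] at h
      exact h
    set M := F T + |A| * gp p1 T + |B| * gp q T with hM_def
    have hM : 0 ≤ M := by
      have := hFnonneg T
      have := gp_nonneg p1 T
      have := gp_nonneg q T
      have := abs_nonneg A
      have := abs_nonneg B
      positivity
    have hGbnd : ∀ μ : ℝ, μ ≤ T → |G μ| ≤ M := by
      intro μ hμ
      have h1 : |G μ| ≤ F μ + |A| * gp p1 μ + |B| * gp q μ := by
        show |F μ - A * gp p1 μ - B * gp q μ| ≤ _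
        have t1 := abs_sub (F μ - A * gp p1 μ) (B * gp q μ)
        have t2 := abs_sub (F μ) (A * gp p1 μ)
        rw [abs_mul, abs_of_nonneg (gp_nonneg q μ)] at t1
        rw [abs_mul, abs_of_nonneg (hFnonneg μ), abs_of_nonneg (gp_nonneg p1 μ)] at t2
        linarith
      refine h1.trans ?_
      rw [hM_def]
      have m1 := hFmono hμ
      have m2 := mul_le_mul_of_nonneg_left (gp_mono hp1.le hμ) (abs_nonneg A)
      have m3 := mul_le_mul_of_nonneg_left (gp_mono hq.le hμ) (abs_nonneg B)
      linarith
    set K := β₀⁻¹ * M / a * 2 ^ a with hK_def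
    have h2a : (0:ℝ) < 2 ^ a := Real.rpow_pos_of_pos (by norm_num) a
    have hK : 0 ≤ K := by positivity
    filter_upwards [eventually_gt_atTop (0:ℝ), eventually_ge_atTop (-e0),
      (tendsto_rpow_atTop hq).eventually_ge_atTop (2 * K / c)] with lam hlam hlame0 hlamq
    set X := lam - e0 with hX_def
    have hX : 0 < X := by rw [hX_def]; linarith
    set Φ : ℝ → ℝ := fun τ => τ ^ (a-1) * (c * β₀ / (2*βq) * gp q (lam - τ))
      + Set.indicator (Ioc 0 X) (fun τ => M * τ ^ (a-1)) τ with hΦ_def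
    have hptwise : ∀ τ : ℝ, τ ∈ Ioi 0 → ‖τ ^ (a-1) * G (lam - τ)‖ ≤ Φ τ := by
      intro τ hτ
      have hτ0 : (0:ℝ) < τ := hτ
      have hτa : (0:ℝ) ≤ τ ^ (a-1) := Real.rpow_nonneg hτ0.le _
      rw [Real.norm_eq_abs, abs_mul, abs_of_nonneg hτa]
      have hind : 0 ≤ Set.indicator (Ioc 0 X) (fun τ : ℝ => M * τ ^ (a-1)) τ :=
        Set.indicator_nonneg (fun t ht => mul_nonneg hM (Real.rpow_nonneg ht.1.le _)) τ
      have first_nonneg : 0 ≤ τ ^ (a-1) * (c * β₀ / (2*βq) * gp q (lam - τ)) :=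
        mul_nonneg hτa (mul_nonneg hε.le (gp_nonneg _ _))
      rcases le_or_gt (lam - τ) e0 with hcase | hcase
      · rw [hGzero _ hcase, abs_zero, mul_zero, hΦ_def]
        linarith
      rcases le_or_gt T (lam - τ) with hcase2 | hcase2
      · have hsm := hGsmall _ hcase2
        have hlτ : (0:ℝ) < lam - τ := lt_of_lt_of_le zero_lt_one (hT1.trans hcase2)
        have hgpq : gp q (lam - τ) = (lam - τ) ^ q := gp_of_nonneg hlτ.le
        have h2 := mul_le_mul_of_nonneg_left hsm hτa
        rw [hΦ_def]
        simp only [hgpq]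
        nlinarith
      · have hmem : τ ∈ Ioc 0 X := ⟨hτ0, by rw [hX_def]; linarith⟩
        rw [hΦ_def]
        simp only [Set.indicator_of_mem hmem]
        have h2 := mul_le_mul_of_nonneg_left (hGbnd _ hcase2.le) hτa
        nlinarith
    have hΦ1 : IntegrableOn (fun τ : ℝ => τ ^ (a-1) * (c * β₀ / (2*βq) * gp q (lam - τ)))
        (Ioi 0) volume := by
      have hi := (lemA_integrable ha hq lam).const_mul (c * β₀ / (2*βq))
      refine MeasureTheory.IntegrableOn.congr_fun hi (fun τ _ => by ring) measurableSet_Ioi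
    have hΦ2 : Integrable (Set.indicator (Ioc 0 X) (fun τ : ℝ => M * τ ^ (a-1)))
        (volume.restrict (Ioi 0)) := by
      have hi : IntegrableOn (fun τ : ℝ => M * τ ^ (a-1)) (Ioc 0 X) volume := by
        have h3 := (intervalIntegral.intervalIntegrable_rpow' (a := 0) (b := X)
          (r := a-1) (by linarith)).const_mul M
        rwa [intervalIntegrable_iff_integrableOn_Ioc_of_le hX.le] at h3
      exact ((MeasureTheory.integrable_indicator_iff measurableSet_Ioc).2 hi).integrableOn
    have hΦint : Integrable Φ (volume.restrict (Ioi 0)) := hΦ1.add hΦ2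
    have hnorm : ‖∫ τ in Ioi (0:ℝ), τ ^ (a-1) * G (lam - τ)‖ ≤ ∫ τ in Ioi (0:ℝ), Φ τ := by
      refine MeasureTheory.norm_integral_le_of_norm_le hΦint ?_
      refine (MeasureTheory.ae_restrict_iff' measurableSet_Ioi).2 ?_
      filter_upwards with τ hτ using hptwise τ hτ
    have hval1 : ∫ τ in Ioi (0:ℝ), τ ^ (a-1) * (c * β₀ / (2*βq) * gp q (lam - τ))
        = c * β₀ / (2*βq) * (βq * lam ^ (a+q)) := by
      rw [show (fun τ : ℝ => τ ^ (a-1) * (c * β₀ / (2*βq) * gp q (lam - τ)))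
          = fun τ : ℝ => (c * β₀ / (2*βq)) * (τ ^ (a-1) * gp q (lam - τ)) from
        funext fun τ => by ring]
      rw [MeasureTheory.integral_const_mul, lemA_value ha hq lam, gp_of_nonneg hlam.le]
    have hval2 : ∫ τ in Ioi (0:ℝ), Set.indicator (Ioc 0 X) (fun τ : ℝ => M * τ ^ (a-1)) τ
        = M * (X ^ a / a) := by
      rw [MeasureTheory.setIntegral_indicator measurableSet_Ioc,
        show Ioi (0:ℝ) ∩ Ioc 0 X = Ioc 0 X from Set.inter_eq_right.2 (fun t ht => ht.1),
        ← intervalIntegral.integral_of_le hX.le, intervalIntegral.integral_const_mul,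
        integral_rpow (Or.inl (by linarith : (-1:ℝ) < a - 1))]
      have harith : a - 1 + 1 = a := by ring
      rw [harith, Real.zero_rpow ha.ne']
      ring
    have hΦval : ∫ τ in Ioi (0:ℝ), Φ τ
        = c * β₀ / (2*βq) * (βq * lam ^ (a+q)) + M * (X ^ a / a) := by
      rw [hΦ_def, MeasureTheory.integral_add hΦ1 hΦ2, hval1, hval2]
    have hX2 : X ^ a ≤ 2 ^ a * lam ^ a := by
      rw [← Real.mul_rpow (by norm_num) hlam.le]
      exact Real.rpow_le_rpow hX.le (by rw [hX_def]; linarith) ha.le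
    have hrw : lam ^ (a+q) = lam ^ a * lam ^ q := Real.rpow_add hlam _ _
    have hsecond : β₀⁻¹ * (M * (X ^ a / a)) ≤ c / 2 * lam ^ (a+q) := by
      have hlama : (0:ℝ) ≤ lam ^ a := Real.rpow_nonneg hlam.le _
      have step1 : β₀⁻¹ * (M * (X ^ a / a)) ≤ K * lam ^ a := by
        rw [hK_def]
        have := mul_le_mul_of_nonneg_left hX2 (mul_nonneg (mul_nonneg (inv_nonneg.2 hβ₀.le) hM) (inv_nonneg.2 ha.le))
        calc β₀⁻¹ * (M * (X ^ a / a)) = (β₀⁻¹ * M * a⁻¹) * X ^ a := by ring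
        _ ≤ (β₀⁻¹ * M * a⁻¹) * (2 ^ a * lam ^ a) := by
            exact mul_le_mul_of_nonneg_left hX2 (by positivity)
        _ = β₀⁻¹ * M / a * 2 ^ a * lam ^ a := by ring
      have step2 : K * lam ^ a ≤ c / 2 * lam ^ (a+q) := by
        rw [hrw]
        have h4 : K ≤ c / 2 * lam ^ q := by
          rw [div_le_iff₀ hc] at hlamq
          linarith
        calc K * lam ^ a ≤ (c / 2 * lam ^ q) * lam ^ a :=
              mul_le_mul_of_nonneg_right h4 hlama
        _ = c / 2 * (lam ^ a * lam ^ q) := by ring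
      linarith
    have hfirst : β₀⁻¹ * (c * β₀ / (2*βq) * (βq * lam ^ (a+q))) = c / 2 * lam ^ (a+q) := by
      field_simp
    rw [Real.norm_eq_abs, Real.norm_eq_abs, abs_mul,
      abs_of_nonneg (inv_nonneg.2 hβ₀.le), abs_of_nonneg (Real.rpow_nonneg hlam.le _)]
    have hfin : β₀⁻¹ * |∫ τ in Ioi (0:ℝ), τ ^ (a-1) * G (lam - τ)|
        ≤ β₀⁻¹ * ∫ τ in Ioi (0:ℝ), Φ τ := by
      refine mul_le_mul_of_nonneg_left ?_ (inv_nonneg.2 hβ₀.le)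
      rwa [Real.norm_eq_abs] at hnorm
    rw [hΦval] at hfin
    rw [← e3]
    calc β₀⁻¹ * |∫ τ in Ioi (0:ℝ), τ ^ (a-1) * G (lam - τ)|
        ≤ β₀⁻¹ * (c * β₀ / (2*βq) * (βq * lam ^ (a+q))) + β₀⁻¹ * (M * (X ^ a / a)) := by
          rw [← mul_add] at *
          linarith [hfin]
      _ ≤ c / 2 * lam ^ (a+q) + c / 2 * lam ^ (a+q) := by
          rw [hfirst]
          linarith [hsecond]
      _ = c * lam ^ (a+q) := by ring
  refine hLO.congr' ?_ EventuallyEq.rfl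
  filter_upwards [eventually_gt_atTop (0:ℝ)] with lam hlam
  exact (hR lam hlam).symm
end
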